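/- Let R be a connected generalized root system, a an object, and g: V^a → ℝ a linear map with g^{-1}(0) ∩ R(a) = ∅. Set R^+_g(a) := {α ∈ R(a) : g(α) > 0} and n := |(−R^+_g(a)) ∩ R^+(a)|, assumed finite. Then there exists f: {1,…,n} → I with 1^a s_{f,n}(R^+(a_{f,n})) = R^+_g(a); moreover, for any such f, (−R^+_g(a)) ∩ R^+(a) = { 1^a s_{f,t-1}(α^{a_{f,t-1}}_{f(t)}) : t ∈ {1,…,n} }. -/

import Mathlib

/-- A Cartan scheme `C(I, A, (τ_i), (C^a))`. -/
structure CartanScheme (I : Type*) [Fintype I] [DecidableEq I] (A : Type*) where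
  τ : I → A → A
  c : A → I → I → ℤ
  c_diag : ∀ a i, c a i i = 2
  c_nonpos : ∀ a i j, i ≠ j → c a i j ≤ 0
  c_zero_iff : ∀ a i j, i ≠ j → (c a i j = 0 ↔ c a j i = 0)
  τ_invol : ∀ i a, τ i (τ i a) = a
  c_invar : ∀ i a j, c (τ i a) i j = c a i j

namespace CartanScheme

variable {I : Type*} [Fintype I] [DecidableEq I] {A : Type*} (cs : CartanScheme I A)

/-- The map `s^a_i : V^a → V^{τ_i(a)}`, `α^a_j ↦ α^{τ_i(a)}_j − c^a_{ij} α^{τ_i(a)}_i`,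
written in the coordinates given by the bases `Π^a`, `Π^{τ_i(a)}`. -/
def sref (a : A) (i : I) (v : I → ℤ) : I → ℤ :=
  fun l => v l - (if l = i then ∑ j, cs.c a i j * v j else 0)

/-- `a_{f,t}`: the iterated images `a_{f,0} = a`, `a_{f,t} = τ_{f(t)}(a_{f,t-1})`. -/
def obj (a : A) (f : ℕ → I) : ℕ → A
  | 0 => a
  | t + 1 => cs.τ (f (t + 1)) (obj a f t)

/-- `1^a s_{f,t} : V^{a_{f,t}} → V^a`, defined by `1^a s_{f,0} = id` and
`1^a s_{f,t} = 1^a s_{f,t-1} ∘ s^{a_{f,t}}_{f(t)}`. -/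
def wmap (a : A) (f : ℕ → I) : ℕ → (I → ℤ) → (I → ℤ)
  | 0 => id
  | t + 1 => wmap a f t ∘ cs.sref (cs.obj a f (t + 1)) (f (t + 1))

end CartanScheme

/-- A connected generalized root system of type a Cartan scheme, with the spaces `V^a`
written in the coordinates given by the bases `Π^a` (so `α^a_i` is `Pi.single i 1`). -/
structure GenRootSystem (I : Type*) [Fintype I] [DecidableEq I] (A : Type*)
    extends CartanScheme I A where
  R : A → Set (I → ℤ)
  R1 : ∀ a, R a = (R a ∩ {v | ∀ i, 0 ≤ v i}) ∪ (-(R a ∩ {v | ∀ i, 0 ≤ v i}))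
  R2 : ∀ a i, R a ∩ (Set.range fun z : ℤ => z • (Pi.single i 1 : I → ℤ)) =
        {Pi.single i 1, -Pi.single i 1}
  R3 : ∀ a i, toCartanScheme.sref a i '' R a = R (τ i a)
  R4 : ∀ a b, a = b ↔ ∃ (f : ℕ → I) (t : ℕ), toCartanScheme.obj a f t = b ∧
        ∀ i, toCartanScheme.wmap a f t (Pi.single i 1) = Pi.single i 1
  R5 : ∀ a b, ∃ (f : ℕ → I) (t : ℕ), toCartanScheme.obj a f t = b

namespace GenRootSystem

variable {I : Type*} [Fintype I] [DecidableEq I] {A : Type*} (rs : GenRootSystem I A)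

/-- The positive roots `R^+(a)`. -/
def Rp (a : A) : Set (I → ℤ) := rs.R a ∩ {v | ∀ i, 0 ≤ v i}

/-- `a_{f,t}` for the root system. -/
def obj (a : A) (f : ℕ → I) (t : ℕ) : A := rs.toCartanScheme.obj a f t

/-- `1^a s_{f,t}` for the root system. -/
def wmap (a : A) (f : ℕ → I) (t : ℕ) : (I → ℤ) → (I → ℤ) := rs.toCartanScheme.wmap a f t

end GenRootSystem

section Lemmas
variable {I : Type*} [Fintype I] [DecidableEq I] {A : Type*}

namespace CartanScheme
variable (cs : CartanScheme I A)

lemma sref_single_self (a : A) (i : I) :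
    cs.sref a i (Pi.single i 1) = -Pi.single i 1 := by
  funext l
  simp only [sref, Pi.neg_apply]
  have hs : (∑ j, cs.c a i j * (Pi.single i 1 : I → ℤ) j) = 2 := by
    rw [Finset.sum_eq_single i]
    · simp [cs.c_diag]
    · intro b _ hb; simp [Pi.single_apply, hb]
    · simp
  by_cases h : l = i
  · subst h; simp [hs]
  · simp [h, Pi.single_apply, h]

lemma sref_sref (a : A) (i : I) (v : I → ℤ) :
    cs.sref (cs.τ i a) i (cs.sref a i v) = v := by
  funext l
  simp only [sref, cs.c_invar]
  by_cases h : l = i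
  · subst h
    have : ∑ j, cs.c a l j * (v j - if j = l then (∑ k, cs.c a l k * v k) else 0)
        = (∑ j, cs.c a l j * v j) - 2 * ∑ k, cs.c a l k * v k := by
      simp only [mul_sub, Finset.sum_sub_distrib, mul_ite, mul_zero]
      congr 1
      rw [Finset.sum_eq_single l]
      · simp [cs.c_diag]
      · intro b _ hb; simp [hb]
      · simp
    rw [if_pos rfl, if_pos rfl, this]; ring
  · simp [h]

lemma sref_injective (a : A) (i : I) : Function.Injective (cs.sref a i) :=
  Function.LeftInverse.injective (g := cs.sref (cs.τ i a) i) (fun v => cs.sref_sref a i v)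

lemma sref_sref' (a : A) (i : I) (v : I → ℤ) :
    cs.sref a i (cs.sref (cs.τ i a) i v) = v := by
  have := cs.sref_sref (cs.τ i a) i v
  rwa [cs.τ_invol] at this

lemma sum_sref (a : A) (i : I) (c : I → ℝ) (v : I → ℤ) :
    ∑ l, c l * ((cs.sref a i v) l : ℝ)
      = ∑ j, (c j - c i * (cs.c a i j : ℝ)) * (v j : ℝ) := by
  have hS : ∀ l, ((cs.sref a i v) l : ℝ)
      = (v l : ℝ) - (if l = i then ∑ j, (cs.c a i j : ℝ) * (v j : ℝ) else 0) := by
    intro l; simp only [sref]; push_cast; by_cases h : l = i <;> simp [h]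
  simp only [hS, mul_sub, Finset.sum_sub_distrib, mul_ite, mul_zero, sub_mul]
  congr 1
  rw [Finset.sum_eq_single i]
  · simp [Finset.mul_sum, mul_assoc]
  · intro b _ hb; simp [hb]
  · simp

end CartanScheme

lemma sum_neg_aux (c : I → ℝ) (v : I → ℤ) :
    (∑ i, c i * (((-v) i : ℤ) : ℝ)) = -∑ i, c i * ((v i : ℤ) : ℝ) := by
  rw [← Finset.sum_neg_distrib]
  apply Finset.sum_congr rfl
  intro j _
  rw [Pi.neg_apply]
  push_cast
  ring

namespace GenRootSystem
variable (rs : GenRootSystem I A)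

lemma single_mem (a : A) (i : I) : (Pi.single i 1 : I → ℤ) ∈ rs.R a := by
  have h : (Pi.single i 1 : I → ℤ) ∈ rs.R a ∩
      (Set.range fun z : ℤ => z • (Pi.single i 1 : I → ℤ)) := by
    rw [rs.R2]; left; rfl
  exact h.1

lemma neg_mem {a : A} {v : I → ℤ} (hv : v ∈ rs.R a) : -v ∈ rs.R a := by
  rw [rs.R1 a] at hv ⊢
  rcases hv with h | h
  · right; simpa using h
  · left; simpa using h

lemma mem_Rp_or {a : A} {v : I → ℤ} (hv : v ∈ rs.R a) :
    v ∈ rs.Rp a ∨ -v ∈ rs.Rp a := by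
  rw [rs.R1 a] at hv
  rcases hv with h | h
  · left; exact h
  · right; simpa [Rp] using h

lemma sref_mem_R {a : A} {i : I} {v : I → ℤ} (hv : v ∈ rs.R a) :
    rs.toCartanScheme.sref a i v ∈ rs.R (rs.τ i a) := by
  rw [← rs.R3]
  exact Set.mem_image_of_mem _ hv

lemma sref_mem_R' {a : A} {i : I} {v : I → ℤ} (hv : v ∈ rs.R (rs.τ i a)) :
    rs.toCartanScheme.sref (rs.τ i a) i v ∈ rs.R a := by
  have := rs.sref_mem_R (a := rs.τ i a) (i := i) hv
  rwa [rs.τ_invol] at this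

lemma sref_mem_Rp {a : A} {i : I} {v : I → ℤ} (hv : v ∈ rs.Rp a)
    (hne : v ≠ Pi.single i 1) :
    rs.toCartanScheme.sref a i v ∈ rs.Rp (rs.τ i a) := by
  obtain ⟨hvR, hvpos⟩ := hv
  have himg : rs.toCartanScheme.sref a i v ∈ rs.R (rs.τ i a) := rs.sref_mem_R hvR
  have hj : ∃ j, j ≠ i ∧ 0 < v j := by
    by_contra h
    push_neg at h
    have hv0 : ∀ j, j ≠ i → v j = 0 := fun j hj => le_antisymm (h j hj) (hvpos j)
    have hmem : v ∈ rs.R a ∩ Set.range (fun z : ℤ => z • (Pi.single i 1 : I → ℤ)) := by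
      refine ⟨hvR, ⟨v i, ?_⟩⟩
      funext l
      by_cases hl : l = i
      · subst hl; simp
      · simp [hv0 l hl, Pi.single_apply, hl]
    rw [rs.R2] at hmem
    rcases hmem with h1 | h1
    · exact hne h1
    · have h2 := hvpos i
      rw [h1] at h2
      simp at h2
  obtain ⟨j, hji, hjpos⟩ := hj
  have hkey : rs.toCartanScheme.sref a i v j = v j := by
    simp [CartanScheme.sref, hji]
  refine ⟨himg, ?_⟩
  rcases rs.mem_Rp_or himg with hp | hp
  · exact hp.2
  · exfalso
    have h2 := hp.2 j
    rw [Pi.neg_apply, hkey] at h2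
    omega

lemma obj_succ (a : A) (f : ℕ → I) (t : ℕ) :
    rs.obj a f (t + 1) = rs.τ (f (t + 1)) (rs.obj a f t) := rfl

lemma wmap_succ (a : A) (f : ℕ → I) (t : ℕ) (v : I → ℤ) :
    rs.wmap a f (t + 1) v
      = rs.wmap a f t (rs.toCartanScheme.sref (rs.obj a f (t + 1)) (f (t + 1)) v) := rfl

lemma obj_congr (a : A) {f g : ℕ → I} (h : ∀ s, 1 ≤ s → f s = g s) (t : ℕ) :
    rs.obj a f t = rs.obj a g t := by
  induction t with
  | zero => rfl
  | succ t ih => rw [rs.obj_succ, rs.obj_succ, ih, h (t+1) (by omega)]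

lemma wmap_congr (a : A) {f g : ℕ → I} (h : ∀ s, 1 ≤ s → f s = g s) (t : ℕ) (v : I → ℤ) :
    rs.wmap a f t v = rs.wmap a g t v := by
  induction t generalizing v with
  | zero => rfl
  | succ t ih =>
    rw [rs.wmap_succ, rs.wmap_succ, ih, rs.obj_congr a h (t+1), h (t+1) (by omega)]

lemma obj_shift (a : A) (f : ℕ → I) (t : ℕ) :
    rs.obj a f (t + 1) = rs.obj (rs.τ (f 1) a) (fun s => f (s + 1)) t := by
  induction t with
  | zero => rfl
  | succ t ih =>
    rw [rs.obj_succ, ih, rs.obj_succ]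

lemma wmap_shift (a : A) (f : ℕ → I) (t : ℕ) (v : I → ℤ) :
    rs.wmap a f (t + 1) v
      = rs.toCartanScheme.sref (rs.τ (f 1) a) (f 1)
          (rs.wmap (rs.τ (f 1) a) (fun s => f (s + 1)) t v) := by
  induction t generalizing v with
  | zero => rfl
  | succ t ih =>
    rw [rs.wmap_succ, ih, rs.wmap_succ]
    congr 1
    rw [rs.obj_shift a f (t+1)]

lemma diff_subset (a : A) (f : ℕ → I) (t : ℕ) :
    rs.Rp a \ (rs.wmap a f t '' rs.Rp (rs.obj a f t))
      ⊆ {v | ∃ s : ℕ, 1 ≤ s ∧ s ≤ t ∧ v = rs.wmap a f (s - 1) (Pi.single (f s) 1)} := by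
  induction t with
  | zero =>
    intro v hv
    exact absurd (Set.mem_image_of_mem _ hv.1) hv.2
  | succ t ih =>
    intro v hv
    obtain ⟨hvRp, hvim⟩ := hv
    by_cases hmem : v ∈ rs.wmap a f t '' rs.Rp (rs.obj a f t)
    · obtain ⟨u, huRp, huv⟩ := hmem
      by_cases hu : u = Pi.single (f (t+1)) 1
      · refine ⟨t+1, by omega, by omega, ?_⟩
        rw [hu] at huv
        exact huv.symm
      · exfalso
        apply hvim
        refine ⟨rs.toCartanScheme.sref (rs.obj a f t) (f (t+1)) u,
          rs.sref_mem_Rp huRp hu, ?_⟩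
        rw [rs.wmap_succ, rs.obj_succ, rs.toCartanScheme.sref_sref]
        exact huv
    · obtain ⟨s, h1, h2, h3⟩ := ih ⟨hvRp, hmem⟩
      exact ⟨s, h1, by omega, h3⟩

lemma N_eq (a : A) (c : I → ℝ) (hg : ∀ v ∈ rs.R a, (∑ i, c i * (v i : ℝ)) ≠ 0) :
    (-{v ∈ rs.R a | 0 < ∑ i, c i * (v i : ℝ)}) ∩ rs.Rp a
      = rs.Rp a \ {v ∈ rs.R a | 0 < ∑ i, c i * (v i : ℝ)} := by
  ext v
  simp only [Set.mem_inter_iff, Set.mem_neg, Set.mem_diff, Set.mem_setOf_eq]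
  constructor
  · rintro ⟨⟨hnR, hnpos⟩, hvRp⟩
    refine ⟨hvRp, fun h => ?_⟩
    rw [sum_neg_aux] at hnpos
    linarith [h.2]
  · rintro ⟨hvRp, hns⟩
    have hvR := hvRp.1
    have hne := hg v hvR
    have hlt : ∑ i, c i * ((v i : ℤ) : ℝ) < 0 := by
      rcases lt_or_gt_of_ne hne with h | h
      · exact h
      · exact absurd ⟨hvR, h⟩ hns
    refine ⟨⟨rs.neg_mem hvR, ?_⟩, hvRp⟩
    rw [sum_neg_aux]
    linarith

lemma sum_single (c : I → ℝ) (i : I) :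
    (∑ j, c j * ((Pi.single i 1 : I → ℤ) j : ℝ)) = c i := by
  rw [Finset.sum_eq_single i]
  · simp
  · intro b _ hb; simp [Pi.single_apply, hb]
  · simp

lemma single_mem_Rp (a : A) (i : I) : (Pi.single i 1 : I → ℤ) ∈ rs.Rp a := by
  refine ⟨rs.single_mem a i, fun j => ?_⟩
  by_cases h : j = i <;> simp [Pi.single_apply, h]

lemma B_spec (a : A) (f : ℕ → I) (n : ℕ) :
    {v : I → ℤ | ∃ t : ℕ, 1 ≤ t ∧ t ≤ n ∧ v = rs.wmap a f (t - 1) (Pi.single (f t) 1)}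
      = (fun t => rs.wmap a f (t - 1) (Pi.single (f t) 1)) '' (Set.Icc 1 n) := by
  ext v
  constructor
  · rintro ⟨t, h1, h2, h3⟩
    exact ⟨t, Set.mem_Icc.mpr ⟨h1, h2⟩, h3.symm⟩
  · rintro ⟨t, ht, h3⟩
    rw [Set.mem_Icc] at ht
    exact ⟨t, ht.1, ht.2, h3.symm⟩

lemma part_two (a : A) (c : I → ℝ)
    (hg : ∀ v ∈ rs.R a, (∑ i, c i * (v i : ℝ)) ≠ 0) (n : ℕ)
    (hn : ((-{v ∈ rs.R a | 0 < ∑ i, c i * (v i : ℝ)}) ∩ rs.Rp a).ncard = n) (f : ℕ → I)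
    (hf : rs.wmap a f n '' rs.Rp (rs.obj a f n) = {v ∈ rs.R a | 0 < ∑ i, c i * (v i : ℝ)}) :
    (-{v ∈ rs.R a | 0 < ∑ i, c i * (v i : ℝ)}) ∩ rs.Rp a
      = {v | ∃ t : ℕ, 1 ≤ t ∧ t ≤ n ∧ v = rs.wmap a f (t - 1) (Pi.single (f t) 1)} := by
  have hBfin : ({v | ∃ t : ℕ, 1 ≤ t ∧ t ≤ n ∧
      v = rs.wmap a f (t - 1) (Pi.single (f t) 1)} : Set (I → ℤ)).Finite := by
    rw [rs.B_spec]
    exact (Set.finite_Icc 1 n).image _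
  have hBcard : ({v | ∃ t : ℕ, 1 ≤ t ∧ t ≤ n ∧
      v = rs.wmap a f (t - 1) (Pi.single (f t) 1)} : Set (I → ℤ)).ncard ≤ n := by
    have hIcc : (Set.Icc 1 n).ncard = n := by
      rw [← Finset.coe_Icc, Set.ncard_coe_finset, Nat.card_Icc]
      exact Nat.add_sub_cancel n 1
    rw [rs.B_spec]
    exact le_trans (Set.ncard_image_le (Set.finite_Icc 1 n)) (le_of_eq hIcc)
  refine Set.eq_of_subset_of_ncard_le ?_ ?_ hBfin
  · rw [rs.N_eq a c hg, ← hf]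
    exact rs.diff_subset a f n
  · rw [hn]
    exact hBcard

lemma step_hg (a : A) (c c' : I → ℝ) (i : I)
    (hc' : ∀ v : I → ℤ, (∑ l, c l * ((rs.toCartanScheme.sref (rs.τ i a) i v) l : ℝ))
      = ∑ j, c' j * ((v j : ℤ) : ℝ))
    (hg : ∀ v ∈ rs.R a, (∑ l, c l * ((v l : ℤ) : ℝ)) ≠ 0) :
    ∀ v ∈ rs.R (rs.τ i a), (∑ j, c' j * ((v j : ℤ) : ℝ)) ≠ 0 := by
  intro v hv
  rw [← hc']
  exact hg _ (rs.sref_mem_R' hv)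

lemma step_image (a : A) (c c' : I → ℝ) (i : I)
    (hc' : ∀ v : I → ℤ, (∑ l, c l * ((rs.toCartanScheme.sref (rs.τ i a) i v) l : ℝ))
      = ∑ j, c' j * ((v j : ℤ) : ℝ)) :
    rs.toCartanScheme.sref (rs.τ i a) i ''
        {v ∈ rs.R (rs.τ i a) | 0 < ∑ j, c' j * ((v j : ℤ) : ℝ)}
      = {v ∈ rs.R a | 0 < ∑ l, c l * ((v l : ℤ) : ℝ)} := by
  ext w
  constructor
  · rintro ⟨β, ⟨hβR, hβpos⟩, rfl⟩
    refine ⟨rs.sref_mem_R' hβR, ?_⟩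
    rw [hc']
    exact hβpos
  · rintro ⟨hwR, hwpos⟩
    refine ⟨rs.toCartanScheme.sref a i w, ⟨rs.sref_mem_R hwR, ?_⟩,
      rs.toCartanScheme.sref_sref a i w⟩
    rw [← hc' (rs.toCartanScheme.sref a i w), rs.toCartanScheme.sref_sref a i w]
    exact hwpos

lemma step_N (a : A) (c c' : I → ℝ) (i : I)
    (hc' : ∀ v : I → ℤ, (∑ l, c l * ((rs.toCartanScheme.sref (rs.τ i a) i v) l : ℝ))
      = ∑ j, c' j * ((v j : ℤ) : ℝ))
    (hg : ∀ v ∈ rs.R a, (∑ l, c l * ((v l : ℤ) : ℝ)) ≠ 0)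
    (hci : c i < 0) :
    rs.Rp (rs.τ i a) \ {v ∈ rs.R (rs.τ i a) | 0 < ∑ j, c' j * ((v j : ℤ) : ℝ)}
      = rs.toCartanScheme.sref a i ''
          ((rs.Rp a \ {v ∈ rs.R a | 0 < ∑ l, c l * ((v l : ℤ) : ℝ)}) \ {Pi.single i 1}) := by
  have hg' := rs.step_hg a c c' i hc' hg
  have hc'i : 0 < ∑ j, c' j * ((Pi.single i 1 : I → ℤ) j : ℝ) := by
    rw [← hc' (Pi.single i 1), rs.toCartanScheme.sref_single_self, sum_neg_aux, sum_single]
    linarith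
  ext β
  constructor
  · rintro ⟨hβRp, hβn⟩
    have hβR := hβRp.1
    have hβne : β ≠ Pi.single i 1 := by
      rintro rfl
      exact hβn ⟨hβR, hc'i⟩
    have hβneg : ∑ l, c l * ((rs.toCartanScheme.sref (rs.τ i a) i β) l : ℝ) < 0 := by
      rcases lt_or_gt_of_ne (hg' β hβR) with hlt | hgt
      · rw [hc']
        exact hlt
      · exact absurd ⟨hβR, hgt⟩ hβn
    set α := rs.toCartanScheme.sref (rs.τ i a) i β with hα
    have hαRp : α ∈ rs.Rp a := by
      have h := rs.sref_mem_Rp (a := rs.τ i a) (i := i) hβRp hβne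
      rwa [rs.τ_invol] at h
    have hαne : α ≠ Pi.single i 1 := by
      intro h
      have hβeq : β = -Pi.single i 1 := by
        rw [← rs.toCartanScheme.sref_sref' a i β, ← hα, h,
          rs.toCartanScheme.sref_single_self]
      have h2 := hβRp.2 i
      rw [hβeq] at h2
      simp at h2
    have hαnotRg : α ∉ {v ∈ rs.R a | 0 < ∑ l, c l * ((v l : ℤ) : ℝ)} := by
      intro hmem
      have h2 := hmem.2
      linarith
    exact ⟨α, ⟨⟨hαRp, hαnotRg⟩, hαne⟩, rs.toCartanScheme.sref_sref' a i β⟩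
  · rintro ⟨α, ⟨⟨hαRp, hαn⟩, hαne⟩, rfl⟩
    have hαR := hαRp.1
    have hαneg : ∑ l, c l * ((α l : ℤ) : ℝ) < 0 := by
      rcases lt_or_gt_of_ne (hg α hαR) with hlt | hgt
      · exact hlt
      · exact absurd ⟨hαR, hgt⟩ hαn
    have hβRp : rs.toCartanScheme.sref a i α ∈ rs.Rp (rs.τ i a) :=
      rs.sref_mem_Rp hαRp (by simpa using hαne)
    refine ⟨hβRp, fun hmem => ?_⟩
    have h2 := hmem.2
    rw [← hc' (rs.toCartanScheme.sref a i α), rs.toCartanScheme.sref_sref a i α] at h2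
    linarith

lemma part_one : ∀ (n : ℕ) (a : A) (c : I → ℝ),
    (∀ v ∈ rs.R a, (∑ i, c i * (v i : ℝ)) ≠ 0) →
    ((-{v ∈ rs.R a | 0 < ∑ i, c i * (v i : ℝ)}) ∩ rs.Rp a).Finite →
    ((-{v ∈ rs.R a | 0 < ∑ i, c i * (v i : ℝ)}) ∩ rs.Rp a).ncard = n →
    ∃ f : ℕ → I, rs.wmap a f n '' rs.Rp (rs.obj a f n)
      = {v ∈ rs.R a | 0 < ∑ i, c i * (v i : ℝ)} := by
  intro n
  induction n with
  | zero =>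
    intro a c hg hfin hn
    obtain ⟨f, t, -, -⟩ := (rs.R4 a a).mp rfl
    refine ⟨fun _ => f 0, ?_⟩
    have hN : rs.Rp a \ {v ∈ rs.R a | 0 < ∑ i, c i * (v i : ℝ)} = ∅ := by
      rw [← rs.N_eq a c hg]
      exact (Set.ncard_eq_zero hfin).mp hn
    have h1 : rs.Rp a ⊆ {v ∈ rs.R a | 0 < ∑ i, c i * (v i : ℝ)} := by
      intro v hv
      by_contra h
      have hmem : v ∈ rs.Rp a \ {v ∈ rs.R a | 0 < ∑ i, c i * (v i : ℝ)} := ⟨hv, h⟩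
      rw [hN] at hmem
      exact hmem
    have h2 : {v ∈ rs.R a | 0 < ∑ i, c i * (v i : ℝ)} ⊆ rs.Rp a := by
      intro v hv
      rcases rs.mem_Rp_or hv.1 with h | h
      · exact h
      · exfalso
        have hnotin : -v ∉ {v ∈ rs.R a | 0 < ∑ i, c i * (v i : ℝ)} := by
          rintro ⟨-, hpos⟩
          rw [sum_neg_aux] at hpos
          linarith [hv.2]
        have hmem : -v ∈ rs.Rp a \ {v ∈ rs.R a | 0 < ∑ i, c i * (v i : ℝ)} :=
          ⟨h, hnotin⟩
        rw [hN] at hmem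
        exact hmem
    show (id : (I → ℤ) → (I → ℤ)) '' rs.Rp a = _
    rw [Set.image_id]
    exact le_antisymm h1 h2
  | succ n ih =>
    intro a c hg hfin hn
    have hNeq := rs.N_eq a c hg
    have hci : ∀ j, c j ≠ 0 := by
      intro j hc
      apply hg _ (rs.single_mem a j)
      rw [sum_single]
      exact hc
    have hex : ∃ i, c i < 0 := by
      by_contra h
      push_neg at h
      have hNempty : (-{v ∈ rs.R a | 0 < ∑ i, c i * (v i : ℝ)}) ∩ rs.Rp a = ∅ := by
        rw [hNeq]
        apply Set.eq_empty_iff_forall_notMem.mpr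
        rintro v ⟨⟨hvR, hvpos⟩, hvn⟩
        apply hvn
        refine ⟨hvR, ?_⟩
        have hvne : ∃ j, v j ≠ 0 := by
          by_contra hall
          push_neg at hall
          exact hg v hvR (by simp [hall])
        obtain ⟨j0, hj0⟩ := hvne
        apply Finset.sum_pos'
        · intro j _
          exact mul_nonneg (h j) (by exact_mod_cast hvpos j)
        · refine ⟨j0, Finset.mem_univ j0, mul_pos (lt_of_le_of_ne (h j0) (Ne.symm (hci j0)))
            (by exact_mod_cast lt_of_le_of_ne (hvpos j0) (Ne.symm hj0))⟩
      rw [hNempty, Set.ncard_empty] at hn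
      exact (Nat.succ_ne_zero n) hn.symm
    obtain ⟨i, hcineg⟩ := hex
    have hc' := fun v => rs.toCartanScheme.sum_sref (rs.τ i a) i c v
    have hg' := rs.step_hg a c _ i hc' hg
    have hstepN := rs.step_N a c _ i hc' hg hcineg
    have hN'eq := rs.N_eq (rs.τ i a) _ hg'
    have hfinD : (rs.Rp a \ {v ∈ rs.R a | 0 < ∑ i, c i * (v i : ℝ)}).Finite := by
      rw [← hNeq]
      exact hfin
    have heiN : Pi.single i 1 ∈ rs.Rp a \ {v ∈ rs.R a | 0 < ∑ i, c i * (v i : ℝ)} := by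
      refine ⟨rs.single_mem_Rp a i, fun hmem => ?_⟩
      have h2 := hmem.2
      rw [sum_single] at h2
      linarith
    have hfin' : ((-{v ∈ rs.R (rs.τ i a) |
        0 < ∑ j, (c j - c i * ((rs.toCartanScheme.c (rs.τ i a) i j : ℤ) : ℝ)) * (v j : ℝ)})
        ∩ rs.Rp (rs.τ i a)).Finite := by
      rw [hN'eq, hstepN]
      exact (hfinD.diff).image _
    have hn' : ((-{v ∈ rs.R (rs.τ i a) |
        0 < ∑ j, (c j - c i * ((rs.toCartanScheme.c (rs.τ i a) i j : ℤ) : ℝ)) * (v j : ℝ)})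
        ∩ rs.Rp (rs.τ i a)).ncard = n := by
      rw [hN'eq, hstepN,
        Set.ncard_image_of_injective _ (rs.toCartanScheme.sref_injective a i),
        Set.ncard_diff_singleton_of_mem heiN, ← hNeq, hn]
      exact Nat.add_sub_cancel n 1
    obtain ⟨f0, hf0⟩ := ih (rs.τ i a) _ hg' hfin' hn'
    refine ⟨fun t => if t ≤ 1 then i else f0 (t - 1), ?_⟩
    have hF1 : (if (1 : ℕ) ≤ 1 then i else f0 (1 - 1)) = i := rfl
    have hagree : ∀ s : ℕ, 1 ≤ s →
        (fun s : ℕ => if s + 1 ≤ 1 then i else f0 (s + 1 - 1)) s = f0 s := by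
      intro s hs
      show (if s + 1 ≤ 1 then i else f0 (s + 1 - 1)) = f0 s
      rw [if_neg (fun h => Nat.not_succ_le_zero 0 (le_trans hs (Nat.le_of_succ_le_succ h)))]
      rfl
    have hobj : rs.obj a (fun t => if t ≤ 1 then i else f0 (t - 1)) (n + 1)
        = rs.obj (rs.τ i a) f0 n := by
      rw [rs.obj_shift, hF1]
      exact rs.obj_congr _ hagree n
    have hwm : ∀ u, rs.wmap a (fun t => if t ≤ 1 then i else f0 (t - 1)) (n + 1) u
        = rs.toCartanScheme.sref (rs.τ i a) i (rs.wmap (rs.τ i a) f0 n u) := by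
      intro u
      rw [rs.wmap_shift, hF1, rs.wmap_congr (rs.τ i a) hagree n u]
    rw [hobj]
    have himg : rs.wmap a (fun t => if t ≤ 1 then i else f0 (t - 1)) (n + 1) ''
          rs.Rp (rs.obj (rs.τ i a) f0 n)
        = rs.toCartanScheme.sref (rs.τ i a) i ''
            (rs.wmap (rs.τ i a) f0 n '' rs.Rp (rs.obj (rs.τ i a) f0 n)) := by
      rw [← Set.image_comp]
      exact Set.image_congr fun u _ => hwm u
    rw [himg, hf0]
    exact rs.step_image a c _ i hc'

end GenRootSystem
end Lemmas

/-- Let `g : V^a → ℝ` be linear (given by coefficients `c : I → ℝ`) with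
`g⁻¹(0) ∩ R(a) = ∅`, set `R^+_g(a) := {α ∈ R(a) : g(α) > 0}` and
`n := |(−R^+_g(a)) ∩ R^+(a)| < ∞`.  Then there exists `f` with
`1^a s_{f,n}(R^+(a_{f,n})) = R^+_g(a)`, and for any such `f`,
`(−R^+_g(a)) ∩ R^+(a) = { 1^a s_{f,t-1}(α^{a_{f,t-1}}_{f(t)}) : 1 ≤ t ≤ n }`. -/
theorem positive_system_by_word {I : Type*} [Fintype I] [DecidableEq I] {A : Type*}
    (rs : GenRootSystem I A) (a : A) (c : I → ℝ)
    (hg : ∀ v ∈ rs.R a, (∑ i, c i * (v i : ℝ)) ≠ 0)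
    (n : ℕ)
    (hfin : ((-{v ∈ rs.R a | 0 < ∑ i, c i * (v i : ℝ)}) ∩ rs.Rp a).Finite)
    (hn : ((-{v ∈ rs.R a | 0 < ∑ i, c i * (v i : ℝ)}) ∩ rs.Rp a).ncard = n) :
    (∃ f : ℕ → I,
        rs.wmap a f n '' rs.Rp (rs.obj a f n) = {v ∈ rs.R a | 0 < ∑ i, c i * (v i : ℝ)}) ∧
    (∀ f : ℕ → I,
        rs.wmap a f n '' rs.Rp (rs.obj a f n) = {v ∈ rs.R a | 0 < ∑ i, c i * (v i : ℝ)} →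
        (-{v ∈ rs.R a | 0 < ∑ i, c i * (v i : ℝ)}) ∩ rs.Rp a =
          {v | ∃ t : ℕ, 1 ≤ t ∧ t ≤ n ∧ v = rs.wmap a f (t - 1) (Pi.single (f t) 1)}) := by
  exact ⟨rs.part_one n a c hg hfin hn, fun f hf => rs.part_two a c hg n hn f hf⟩
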